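/- Let μ ∈ ℝ^d be a unit vector and let A : ℝ^d → ℝ^d be an invertible linear map with operator norm ‖A‖_op ≤ 1 that maps the hyperplane μ^⊥ into itself. Define 𝒢(y) = Exp_μ(A(Log_μ(y))) and 𝒢⁻¹(y) = Exp_μ(A⁻¹(Log_μ(y))) for unit vectors y ≠ −μ. Then for every unit vector y with y ≠ −μ, 𝒢⁻¹(𝒢(y)) = y. -/

import Mathlib

open scoped RealInnerProductSpace

/-- The Riemannian exponential map of the unit sphere at `μ`:
`Exp_μ(v) = cos(‖v‖)·μ + (sin(‖v‖)/‖v‖)·v`, with `Exp_μ(0) = μ`. -/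
noncomputable def ExpMap {d : ℕ} (μ v : EuclideanSpace ℝ (Fin d)) :
    EuclideanSpace ℝ (Fin d) :=
  Real.cos ‖v‖ • μ + (Real.sin ‖v‖ / ‖v‖) • v

/-- The Riemannian logarithmic map of the unit sphere at `μ`:
`Log_μ(x) = (θ/sin θ)·(x − ⟪x,μ⟫·μ)` with `θ = arccos ⟪x,μ⟫`, and `Log_μ(μ) = 0`. -/
noncomputable def LogMap {d : ℕ} (μ x : EuclideanSpace ℝ (Fin d)) :
    EuclideanSpace ℝ (Fin d) :=
  (Real.arccos ⟪x, μ⟫ / Real.sin (Real.arccos ⟪x, μ⟫)) • (x - ⟪x, μ⟫ • μ)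

lemma expMap_zero {d : ℕ} (μ : EuclideanSpace ℝ (Fin d)) : ExpMap μ 0 = μ := by
  simp [ExpMap]

lemma logMap_self {d : ℕ} (μ : EuclideanSpace ℝ (Fin d)) (hμ : ‖μ‖ = 1) :
    LogMap μ μ = 0 := by
  have h : ⟪μ, μ⟫ = 1 := by
    rw [real_inner_self_eq_norm_sq, hμ]; norm_num
  simp [LogMap, h, hμ]

lemma neg_one_lt_inner {d : ℕ} (μ y : EuclideanSpace ℝ (Fin d)) (hμ : ‖μ‖ = 1)
    (hy : ‖y‖ = 1) (hyμ : y ≠ -μ) : -1 < ⟪y, μ⟫ := by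
  have habs : |⟪y, μ⟫| ≤ 1 := by
    calc |⟪y, μ⟫| ≤ ‖y‖ * ‖μ‖ := abs_real_inner_le_norm y μ
    _ = 1 := by rw [hy, hμ]; ring
  rcases (neg_le_of_abs_le habs).lt_or_eq with h | h
  · exact h
  · exfalso; apply hyμ
    have h2 : ‖y + μ‖ ^ 2 = 0 := by
      rw [norm_add_pow_two_real, hy, hμ, ← h]; ring
    have h3 : y + μ = 0 :=
      norm_eq_zero.mp (pow_eq_zero_iff (n := 2) (by norm_num) |>.mp h2)
    exact eq_neg_of_add_eq_zero_left h3

lemma logMap_expMap {d : ℕ} (μ v : EuclideanSpace ℝ (Fin d)) (hμ : ‖μ‖ = 1)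
    (hv : ⟪v, μ⟫ = 0) (hlt : ‖v‖ < Real.pi) : LogMap μ (ExpMap μ v) = v := by
  by_cases hv0 : v = 0
  · subst hv0; rw [expMap_zero, logMap_self μ hμ]
  · have hθ0 : 0 < ‖v‖ := norm_pos_iff.mpr hv0
    have hμμ : ⟪μ, μ⟫ = 1 := by
      rw [real_inner_self_eq_norm_sq, hμ]; norm_num
    have hinner : ⟪ExpMap μ v, μ⟫ = Real.cos ‖v‖ := by
      rw [ExpMap, inner_add_left, real_inner_smul_left, real_inner_smul_left, hμμ, hv]
      ring
    have harc : Real.arccos ⟪ExpMap μ v, μ⟫ = ‖v‖ := by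
      rw [hinner, Real.arccos_cos hθ0.le hlt.le]
    have hsin : Real.sin ‖v‖ ≠ 0 := (Real.sin_pos_of_pos_of_lt_pi hθ0 hlt).ne'
    have hsub : ExpMap μ v - ⟪ExpMap μ v, μ⟫ • μ = (Real.sin ‖v‖ / ‖v‖) • v := by
      rw [hinner, ExpMap]; module
    rw [LogMap, harc, hsub, smul_smul]
    rw [div_mul_div_comm, mul_comm, div_self (by positivity), one_smul]

lemma eq_of_inner_one {d : ℕ} (μ y : EuclideanSpace ℝ (Fin d)) (hμ : ‖μ‖ = 1)
    (hy : ‖y‖ = 1) (h : ⟪y, μ⟫ = 1) : y = μ := by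
  have h2 : ‖y - μ‖ ^ 2 = 0 := by
    rw [norm_sub_pow_two_real, hy, hμ, h]; ring
  have := pow_eq_zero_iff (n := 2) (by norm_num) |>.mp h2
  rwa [norm_sub_eq_zero_iff] at this

lemma norm_sub_inner_smul {d : ℕ} (μ y : EuclideanSpace ℝ (Fin d)) (hμ : ‖μ‖ = 1)
    (hy : ‖y‖ = 1) (hcm1 : -1 ≤ ⟪y, μ⟫) (hc1 : ⟪y, μ⟫ ≤ 1) :
    ‖y - ⟪y, μ⟫ • μ‖ = Real.sin (Real.arccos ⟪y, μ⟫) := by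
  have hsinθ : 0 ≤ Real.sin (Real.arccos ⟪y, μ⟫) := Real.sin_nonneg_of_nonneg_of_le_pi
    (Real.arccos_nonneg _) (Real.arccos_le_pi _)
  have h1 : ‖y - ⟪y, μ⟫ • μ‖ ^ 2 = Real.sin (Real.arccos ⟪y, μ⟫) ^ 2 := by
    rw [norm_sub_pow_two_real, Real.sin_sq, Real.cos_arccos hcm1 hc1]
    rw [norm_smul, real_inner_smul_right, hy, hμ]
    simp [abs_mul]
    ring
  nlinarith [norm_nonneg (y - ⟪y, μ⟫ • μ)]

lemma expMap_logMap {d : ℕ} (μ y : EuclideanSpace ℝ (Fin d)) (hμ : ‖μ‖ = 1)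
    (hy : ‖y‖ = 1) (hyμ : y ≠ -μ) : ExpMap μ (LogMap μ y) = y := by
  have hcm1 : -1 < ⟪y, μ⟫ := neg_one_lt_inner μ y hμ hy hyμ
  have hc1 : ⟪y, μ⟫ ≤ 1 := by
    calc ⟪y, μ⟫ ≤ ‖y‖ * ‖μ‖ := real_inner_le_norm y μ
    _ = 1 := by rw [hy, hμ]; ring
  by_cases hc1' : ⟪y, μ⟫ = 1
  · rw [eq_of_inner_one μ y hμ hy hc1', logMap_self μ hμ, expMap_zero]
  · have hclt : ⟪y, μ⟫ < 1 := lt_of_le_of_ne hc1 hc1'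
    set θ := Real.arccos ⟪y, μ⟫ with hθ
    have hθpos : 0 < θ := Real.arccos_pos.mpr hclt
    have hcos : Real.cos θ = ⟪y, μ⟫ := Real.cos_arccos hcm1.le hc1
    have hθlt : θ < Real.pi := lt_of_le_of_ne (Real.arccos_le_pi _)
      (fun h => by rw [← hcos, h, Real.cos_pi] at hcm1; linarith)
    have hsinθ : 0 < Real.sin θ := Real.sin_pos_of_pos_of_lt_pi hθpos hθlt
    have hnorm : ‖y - ⟪y, μ⟫ • μ‖ = Real.sin θ :=
      norm_sub_inner_smul μ y hμ hy hcm1.le hc1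
    have hnormLog : ‖LogMap μ y‖ = θ := by
      rw [LogMap, norm_smul, ← hθ, hnorm, Real.norm_eq_abs, abs_div,
        abs_of_pos hθpos, abs_of_pos hsinθ, div_mul_cancel₀ _ hsinθ.ne']
    rw [ExpMap, hnormLog, hcos, LogMap, ← hθ, smul_smul]
    have h5 : Real.sin θ / θ * (θ / Real.sin θ) = 1 := by field_simp
    rw [h5, one_smul]
    module

lemma inner_logMap {d : ℕ} (μ y : EuclideanSpace ℝ (Fin d)) (hμ : ‖μ‖ = 1) :
    ⟪LogMap μ y, μ⟫ = 0 := by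
  have hμμ : ⟪μ, μ⟫ = 1 := by
    rw [real_inner_self_eq_norm_sq, hμ]; norm_num
  rw [LogMap, real_inner_smul_left, inner_sub_left, real_inner_smul_left, hμμ]
  ring

lemma norm_logMap_lt {d : ℕ} (μ y : EuclideanSpace ℝ (Fin d)) (hμ : ‖μ‖ = 1)
    (hy : ‖y‖ = 1) (hyμ : y ≠ -μ) : ‖LogMap μ y‖ < Real.pi := by
  have hcm1 : -1 < ⟪y, μ⟫ := neg_one_lt_inner μ y hμ hy hyμ
  have hc1 : ⟪y, μ⟫ ≤ 1 := by
    calc ⟪y, μ⟫ ≤ ‖y‖ * ‖μ‖ := real_inner_le_norm y μ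
    _ = 1 := by rw [hy, hμ]; ring
  by_cases hc1' : ⟪y, μ⟫ = 1
  · rw [eq_of_inner_one μ y hμ hy hc1', logMap_self μ hμ]
    simpa using Real.pi_pos
  · have hclt : ⟪y, μ⟫ < 1 := lt_of_le_of_ne hc1 hc1'
    set θ := Real.arccos ⟪y, μ⟫ with hθ
    have hθpos : 0 < θ := Real.arccos_pos.mpr hclt
    have hcos : Real.cos θ = ⟪y, μ⟫ := Real.cos_arccos hcm1.le hc1
    have hθlt : θ < Real.pi := lt_of_le_of_ne (Real.arccos_le_pi _)
      (fun h => by rw [← hcos, h, Real.cos_pi] at hcm1; linarith)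
    have hsinθ : 0 < Real.sin θ := Real.sin_pos_of_pos_of_lt_pi hθpos hθlt
    have hnorm : ‖y - ⟪y, μ⟫ • μ‖ = Real.sin θ :=
      norm_sub_inner_smul μ y hμ hy hcm1.le hc1
    rw [LogMap, norm_smul, ← hθ, hnorm, Real.norm_eq_abs, abs_div,
      abs_of_pos hθpos, abs_of_pos hsinθ, div_mul_cancel₀ _ hsinθ.ne']
    exact hθlt

/-- For an invertible linear map `A` with operator norm at most `1` mapping `μ^⊥` into
itself, the map `𝒢(y) = Exp_μ(A(Log_μ(y)))` has the left inverse
`𝒢⁻¹(y) = Exp_μ(A⁻¹(Log_μ(y)))` on `S^{d-1}\{−μ}`. -/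
theorem mahalanobis_transform_left_inverse {d : ℕ}
    (μ : EuclideanSpace ℝ (Fin d)) (hμ : ‖μ‖ = 1)
    (A : EuclideanSpace ℝ (Fin d) ≃L[ℝ] EuclideanSpace ℝ (Fin d))
    (hAnorm : ‖(A : EuclideanSpace ℝ (Fin d) →L[ℝ] EuclideanSpace ℝ (Fin d))‖ ≤ 1)
    (hA : ∀ v : EuclideanSpace ℝ (Fin d), ⟪v, μ⟫ = 0 → ⟪A v, μ⟫ = 0)
    (y : EuclideanSpace ℝ (Fin d)) (hy : ‖y‖ = 1) (hyμ : y ≠ -μ) :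
    ExpMap μ (A.symm (LogMap μ (ExpMap μ (A (LogMap μ y))))) = y := by
  set v := LogMap μ y with hv
  have hvperp : ⟪v, μ⟫ = 0 := inner_logMap μ y hμ
  have hvlt : ‖v‖ < Real.pi := norm_logMap_lt μ y hμ hy hyμ
  have hAvperp : ⟪A v, μ⟫ = 0 := hA v hvperp
  have hAvlt : ‖A v‖ < Real.pi := by
    calc ‖A v‖ ≤ ‖(A : EuclideanSpace ℝ (Fin d) →L[ℝ] EuclideanSpace ℝ (Fin d))‖ * ‖v‖ :=
      (A : EuclideanSpace ℝ (Fin d) →L[ℝ] EuclideanSpace ℝ (Fin d)).le_opNorm v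
    _ ≤ 1 * ‖v‖ := mul_le_mul_of_nonneg_right hAnorm (norm_nonneg v)
    _ = ‖v‖ := one_mul _
    _ < Real.pi := hvlt
  rw [logMap_expMap μ (A v) hμ hAvperp hAvlt, A.symm_apply_apply,
    expMap_logMap μ y hμ hy hyμ]
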